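/- For b ∈ D (open unit disc in ℂ) with b ≠ 0, the function Φ_b(z) = log|(b - z)(1 - conj(b) z)| satisfies ∂Φ_b/∂ν(z) = 1 for every z ∈ ∂D, where ν is the outward unit normal (radial direction). -/

import Mathlib

open Complex

/-- For `b` in the unit disc, `b ≠ 0`, the function `Φ_b(z) = log|(b - z)(1 - conj(b) z)|`
has normal (radial) derivative equal to `1` at every point of the unit circle. -/
theorem normal_derivative_log_pair (b : ℂ) (hb : ‖b‖ < 1) (hb0 : b ≠ 0) :
    ∀ z : ℂ, ‖z‖ = 1 →
      HasDerivAt (fun t : ℝ =>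
          Real.log ‖(b - (t : ℂ) * z) *
            (1 - (starRingEnd ℂ) b * ((t : ℂ) * z))‖) 1 1 := by
  intro z hz
  have hz0 : z ≠ 0 := by
    intro h; rw [h] at hz; simp at hz
  have hzz : z * (starRingEnd ℂ) z = 1 := by
    rw [Complex.mul_conj]
    norm_cast
    rw [Complex.normSq_eq_norm_sq, hz]; norm_num
  have hw : (starRingEnd ℂ) z = z⁻¹ := by
    field_simp
    linear_combination hzz
  set c := (starRingEnd ℂ) b with hc
  set F : ℂ → ℂ := fun s => (b - s * z) * (1 - c * (s * z)) with hF
  set F' : ℂ := (-z) * (1 - c * z) + (b - z) * (-(c * z)) with hF'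
  have hFd : HasDerivAt F F' 1 := by
    have h1 : HasDerivAt (fun s : ℂ => b - s * z) (-z) 1 := by
      simpa using ((hasDerivAt_id (1:ℂ)).mul_const z).const_sub b
    have h2 : HasDerivAt (fun s : ℂ => 1 - c * (s * z)) (-(c * z)) 1 := by
      simpa using (((hasDerivAt_id (1:ℂ)).mul_const z).const_mul c).const_sub 1
    have := h1.mul h2
    exact this.congr_deriv (by simp only [hF']; ring)
  have hFr : HasDerivAt (fun t : ℝ => F t) F' 1 := by
    have := hFd.comp_ofReal (z := (1:ℝ))
    simpa using this
  -- F 1 ≠ 0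
  have hF1 : F 1 ≠ 0 := by
    apply mul_ne_zero
    · intro h
      have : b = z := by linear_combination h
      rw [this, hz] at hb; exact lt_irrefl _ hb
    · intro h
      have h1 : c * z = 1 := by linear_combination -h
      have : ‖c * z‖ = 1 := by rw [h1]; simp
      rw [norm_mul, hc, Complex.norm_conj, hz, mul_one] at this
      rw [this] at hb; exact lt_irrefl _ hb
  have hns : Complex.normSq (F 1) ≠ 0 := by
    simpa [Complex.normSq_eq_norm_sq, pow_eq_zero_iff] using hF1
  -- conj composition
  have hconj : HasDerivAt (fun t : ℝ => (starRingEnd ℂ) (F t)) ((starRingEnd ℂ) F') 1 := by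
    have := (Complex.conjCLE.hasFDerivAt (x := F 1)).comp_hasDerivAt 1 hFr
    exact this
  have hmul : HasDerivAt (fun t : ℝ => F t * (starRingEnd ℂ) (F t))
      (F' * (starRingEnd ℂ) (F 1) + F 1 * (starRingEnd ℂ) F') 1 := hFr.mul hconj
  -- key identity
  have key : F' * (starRingEnd ℂ) (F 1) + F 1 * (starRingEnd ℂ) F' =
      2 * (F 1 * (starRingEnd ℂ) (F 1)) := by
    simp only [hF, hF', map_add, map_mul, map_sub, map_neg, map_one, Complex.conj_conj, hc,
      hw, one_mul]
    field_simp
    ring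
  have hg : HasDerivAt (fun t : ℝ => Complex.normSq (F t)) (2 * Complex.normSq (F 1)) 1 := by
    have hre := (Complex.reCLM.hasFDerivAt
      (x := F 1 * (starRingEnd ℂ) (F 1))).comp_hasDerivAt 1 hmul
    have he : ∀ t : ℝ, (F t * (starRingEnd ℂ) (F t)).re = Complex.normSq (F t) := by
      intro t; rw [Complex.mul_conj]; simp
    have hd : Complex.reCLM (F' * (starRingEnd ℂ) (F 1) + F 1 * (starRingEnd ℂ) F')
        = 2 * Complex.normSq (F 1) := by
      rw [Complex.reCLM_apply, key, Complex.mul_conj]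
      push_cast
      simp
    rw [hd] at hre
    refine hre.congr_of_eventuallyEq ?_
    filter_upwards with t
    simp [he t]
  have hlog : HasDerivAt (fun t : ℝ => Real.log (Complex.normSq (F t)) / 2)
      (((Complex.normSq (F 1))⁻¹ * (2 * Complex.normSq (F 1))) / 2) 1 := by
    exact ((Real.hasDerivAt_log hns).comp 1 hg).div_const 2
  have hval : ((Complex.normSq (F 1))⁻¹ * (2 * Complex.normSq (F 1))) / 2 = 1 := by
    field_simp
  rw [hval] at hlog
  refine hlog.congr_of_eventuallyEq ?_
  filter_upwards with t
  rw [Complex.norm_def, Real.log_sqrt (Complex.normSq_nonneg _)]
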